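/- Let K and X₀ be groups, μ : X₀ → Aut(K) a group homomorphism, P a submonoid of the semidirect product K ⋊_μ X₀ and P₀ a submonoid of X₀ such that: (i) for every (k,x) ∈ P, x ∈ P₀ (monotonicity of the projection); (ii) for every x ∈ P₀, (1,x) ∈ P (monotonicity of the section); and (iii) the Schreier condition holds: for every (k,x) ∈ P, (k,1) ∈ P. Then P = {(k,x) ∈ K × X₀ : (k,1) ∈ P and x ∈ P₀}; that is, P is the product of the cone P ∩ (K × {1}) of the kernel with the cone P₀ of the base. -/
import Mathlib

/-- a Schreier positive cone on a semidirect product of groups is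
necessarily the product of the cone of the kernel and the cone of the base. -/
theorem schreier_cone_is_product {K X₀ : Type*} [Group K] [Group X₀]
    (μ : X₀ →* MulAut K) (P : Submonoid (K ⋊[μ] X₀)) (P₀ : Submonoid X₀)
    (hproj : ∀ g ∈ P, SemidirectProduct.right g ∈ P₀)
    (hsec : ∀ x ∈ P₀, (SemidirectProduct.inr x : K ⋊[μ] X₀) ∈ P)
    (hschreier : ∀ g ∈ P, (SemidirectProduct.inl (SemidirectProduct.left g) : K ⋊[μ] X₀) ∈ P) :
    ∀ g : K ⋊[μ] X₀,
      g ∈ P ↔ ((SemidirectProduct.inl g.left : K ⋊[μ] X₀) ∈ P ∧ g.right ∈ P₀) := by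
  intro g
  constructor
  · exact fun hg => ⟨hschreier g hg, hproj g hg⟩
  · rintro ⟨h1, h2⟩
    have : g = SemidirectProduct.inl g.left * SemidirectProduct.inr g.right :=
      (SemidirectProduct.inl_left_mul_inr_right g).symm
    rw [this]
    exact P.mul_mem h1 (hsec _ h2)
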